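/- The map sending a positive integer n with Zeckendorf representation n = sum_{i=2}^{r} a_i F_i (with a_i a_{i+1} = 0) to fib(n) = sum_{i=2}^{r} a_i 2^{i-2} is a bijection from the positive natural numbers onto the set of fibbinary numbers (positive integers whose binary representations have no two consecutive 1s). -/

import Mathlib

/-- A natural number is fibbinary if its binary representation has no two consecutive 1 bits. -/
def Fibbinary (m : ℕ) : Prop := ∀ i : ℕ, ¬(m.testBit i ∧ m.testBit (i + 1))

/-- fib-weighted sum of the bits of `m`, with bit 0 having weight `fib k`. -/
def zsum : ℕ → ℕ → ℕ
  | 0, _ => 0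
  | (m+1), k => (m+1) % 2 * Nat.fib k + zsum ((m+1)/2) (k+1)
  decreasing_by exact Nat.div_lt_self (Nat.succ_pos m) one_lt_two

lemma zsum_eq (m k : ℕ) : zsum m k = m % 2 * Nat.fib k + zsum (m/2) (k+1) := by
  cases m with
  | zero => simp [zsum]
  | succ m => rw [zsum]

lemma zsum_zero (k : ℕ) : zsum 0 k = 0 := by simp [zsum]

lemma zsum_one (k : ℕ) : zsum 1 k = Nat.fib k := by
  rw [zsum_eq]; simp [zsum_zero]

lemma fibbinary_div_two {m : ℕ} (hm : Fibbinary m) : Fibbinary (m/2) := by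
  intro i
  rw [Nat.testBit_div_two, Nat.testBit_div_two]
  exact hm (i+1)

/-- lower bound at exponent 0 -/
lemma fib_le_zsum : ∀ m, 0 < m → ∀ k, Nat.fib k ≤ zsum m k := by
  intro m
  induction m using Nat.strong_induction_on with
  | _ m ih =>
    intro hm k
    rw [zsum_eq]
    rcases Nat.even_or_odd m with he | ho
    · have hmod : m % 2 = 0 := Nat.even_iff.mp he
      have h2 : 0 < m / 2 := by omega
      have := ih (m/2) (by omega) h2 (k+1)
      have : Nat.fib k ≤ zsum (m/2) (k+1) := le_trans (Nat.fib_mono (by omega)) this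
      omega
    · have : m % 2 = 1 := Nat.odd_iff.mp ho
      simp [this]

lemma zsum_lower : ∀ j m k, 2^j ≤ m → Nat.fib (j + k) ≤ zsum m k := by
  intro j
  induction j with
  | zero => intro m k hm; simpa using fib_le_zsum m (by simp at hm; omega) k
  | succ j ih =>
    intro m k hm
    have h2 : 2^j ≤ m / 2 := by
      have : 2 * 2^j ≤ m := by rw [pow_succ] at hm; omega
      omega
    have := ih (m/2) (k+1) h2
    rw [zsum_eq]
    have : Nat.fib (j + 1 + k) ≤ zsum (m/2) (k+1) := by
      rw [show j + 1 + k = j + (k+1) by omega]; exact this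
    omega

lemma zsum_pos {m : ℕ} (hm : 0 < m) : 0 < zsum m 2 := by
  have := fib_le_zsum m hm 2
  simp [Nat.fib] at this ⊢; omega

/-- adding a top power of two -/
lemma zsum_pow_add : ∀ j s k, s < 2^j → zsum (2^j + s) k = Nat.fib (j + k) + zsum s k := by
  intro j
  induction j with
  | zero =>
    intro s k hs
    interval_cases s
    simp [zsum_one, zsum_zero]
  | succ j ih =>
    intro s k hs
    have hmod : (2^(j+1) + s) % 2 = s % 2 := by
      have : 2^(j+1) % 2 = 0 := by simp [pow_succ, Nat.mul_mod]
      omega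
    have hdiv : (2^(j+1) + s) / 2 = 2^j + s / 2 := by
      rw [pow_succ]
      omega
    have hs2 : s / 2 < 2^j := by
      rw [pow_succ] at hs; omega
    rw [zsum_eq, hmod, hdiv, ih (s/2) (k+1) hs2, zsum_eq s k]
    have : j + 1 + k = j + (k+1) := by omega
    rw [this]; ring

/-- upper bound for fibbinary numbers -/
lemma zsum_upper : ∀ m, Fibbinary m → ∀ j k, m < 2^j →
    zsum m (k+2) + Nat.fib (k+1) ≤ Nat.fib (j + k + 2) := by
  intro m
  induction m using Nat.strong_induction_on with
  | _ m ih =>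
    intro hm j k hmj
    rcases Nat.eq_zero_or_pos m with rfl | hm0
    · rw [zsum_zero]
      simpa using Nat.fib_mono (show k+1 ≤ j + k + 2 by omega)
    have hj1 : 1 ≤ j := by
      by_contra h
      interval_cases j <;> omega
    rcases Nat.even_or_odd m with he | ho
    · -- even case
      have hmod : m % 2 = 0 := Nat.even_iff.mp he
      have hdiv : m / 2 < 2^(j-1) := by
        have : 2^j = 2 * 2^(j-1) := by
          rw [← pow_succ']; congr 1; omega
        omega
      have hthis := ih (m/2) (by omega) (fibbinary_div_two hm) (j-1) (k+1) hdiv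
      rw [zsum_eq, hmod]
      have heq : j - 1 + (k+1) + 2 = j + k + 2 := by omega
      have heq2 : k + 1 + 2 = k + 2 + 1 := by omega
      rw [heq, heq2, show k+1+1 = k+2 from rfl] at hthis
      have hfib : Nat.fib (k+1) ≤ Nat.fib (k+2) := Nat.fib_mono (by omega)
      omega
    · -- odd case
      have hmod : m % 2 = 1 := Nat.odd_iff.mp ho
      rcases Nat.lt_or_ge m 2 with h1 | h2
      · -- m = 1
        have : m = 1 := by omega
        subst this
        rw [zsum_one]
        have h1 : Nat.fib (k+2) + Nat.fib (k+1) = Nat.fib (k+3) := by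
          rw [show k+3 = (k+1)+2 from rfl, Nat.fib_add_two (n := k+1),
            show k+1+1 = k+2 from rfl]
          omega
        have h2 : Nat.fib (k+3) ≤ Nat.fib (j+k+2) := Nat.fib_mono (by omega)
        omega
      · -- m ≥ 3 odd
        have hm3 : 3 ≤ m := by omega
        have hj2 : 2 ≤ j := by
          by_contra h
          interval_cases j <;> omega
        -- m/2 is even since fibbinary
        have hb0 : m.testBit 0 = true := by simp [Nat.testBit_zero, hmod]
        have hb1 : m.testBit 1 = false := by
          by_contra h
          exact hm 0 ⟨by simp [hb0], by simpa using h⟩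
        have hm2mod : m / 2 % 2 = 0 := by
          have := Nat.testBit_succ m 0
          rw [hb1] at this
          simp [Nat.testBit_zero] at this
          omega
        have hfb4 : Fibbinary (m/2/2) := fibbinary_div_two (fibbinary_div_two hm)
        have hdiv4 : m / 2 / 2 < 2^(j-2) := by
          have : 2^j = 2^(j-2) * 2^2 := by
            rw [← pow_add]; congr 1; omega
          omega
        have hih := ih (m/2/2) (by omega) hfb4 (j-2) (k+2) hdiv4
        have heq : j - 2 + (k+2) + 2 = j + k + 2 := by omega
        have heq2 : k + 2 + 2 = k + 2 + 1 + 1 := by omega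
        rw [heq, heq2] at hih
        rw [zsum_eq, hmod, zsum_eq (m/2), hm2mod]
        have hfib1 : Nat.fib (k+2) + Nat.fib (k+1) = Nat.fib (k+2+1) := by
          rw [show k+2+1 = (k+1)+2 from rfl, Nat.fib_add_two (n := k+1),
            show k+1+1 = k+2 from rfl]
          omega
        omega

lemma zsum_upper' {m j : ℕ} (hm : Fibbinary m) (hmj : m < 2^j) :
    zsum m 2 < Nat.fib (j + 2) := by
  have := zsum_upper m hm j 0 hmj
  simp [Nat.fib] at this ⊢
  omega

/-- testBit of `2^j + s` for `s < 2^j` -/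
lemma testBit_pow_add {j s : ℕ} (hs : s < 2^j) (i : ℕ) :
    (2^j + s).testBit i = if i = j then true else s.testBit i := by
  rcases lt_trichotomy i j with h | rfl | h
  · have h1 : (2^j + s) % 2^j = s := by
      rw [Nat.add_mod_left, Nat.mod_eq_of_lt hs]
    have h2 := Nat.testBit_mod_two_pow (2^j+s) j i
    rw [h1, decide_eq_true h, Bool.true_and] at h2
    rw [if_neg (by omega), ← h2]
  · have hd : (2^i + s) / 2^i = 1 := by
      rw [Nat.add_comm, Nat.add_div_right _ (Nat.two_pow_pos i),
        Nat.div_eq_of_lt hs]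
    rw [Nat.testBit_eq_decide_div_mod_eq, hd, if_pos rfl]
    simp
  · have hlt : 2^j + s < 2^i := by
      have h1 : 2^(j+1) ≤ 2^i := Nat.pow_le_pow_right (by omega) (by omega)
      rw [pow_succ] at h1
      omega
    rw [Nat.testBit_lt_two_pow hlt, if_neg (by omega),
      Nat.testBit_lt_two_pow (lt_trans hs (Nat.pow_lt_pow_right (by omega) h))]

lemma fibbinary_pow_add {j s : ℕ} (hf : Fibbinary s) (hs : 2*s < 2^j) :
    Fibbinary (2^j + s) := by
  have hs' : s < 2^j := by omega
  intro i ⟨h1, h2⟩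
  rw [testBit_pow_add hs'] at h1 h2
  rcases lt_trichotomy (i+1) j with h | rfl | h
  · rw [if_neg (by omega)] at h1 h2
    exact hf i ⟨h1, h2⟩
  · -- i+1 = j : bit i of s must be 0 since 2*s < 2^(i+1), i.e. s < 2^i
    rw [if_neg (by omega)] at h1
    have : s < 2^i := by
      rw [pow_succ] at hs; omega
    rw [Nat.testBit_lt_two_pow this] at h1
    exact Bool.false_ne_true h1
  · -- i+1 > j: bit (i+1) is either (i+1=j impossible) or s.testBit (i+1) with s < 2^(i+1)
    rw [if_neg (by omega)] at h2
    have : s < 2^(i+1) := lt_of_lt_of_le hs' (Nat.pow_le_pow_right (by omega) (by omega))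
    rw [Nat.testBit_lt_two_pow this] at h2
    exact Bool.false_ne_true h2

lemma fibbinary_mod_pow {m : ℕ} (hf : Fibbinary m) (j : ℕ) : Fibbinary (m % 2^j) := by
  intro i ⟨h1, h2⟩
  rw [Nat.testBit_mod_two_pow] at h1 h2
  simp only [Bool.and_eq_true, decide_eq_true_eq] at h1 h2
  exact hf i ⟨h1.2, h2.2⟩

/-- Injectivity of `zsum · 2` on fibbinary numbers. -/
lemma zsum_inj : ∀ m, Fibbinary m → ∀ m', Fibbinary m' → zsum m 2 = zsum m' 2 → m = m' := by
  intro m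
  induction m using Nat.strong_induction_on with
  | _ m ih =>
    intro hm m' hm' heq
    rcases Nat.eq_zero_or_pos m with rfl | hm0
    · rcases Nat.eq_zero_or_pos m' with rfl | hm0'
      · rfl
      · have := zsum_pos hm0'
        rw [← heq, zsum_zero] at this
        omega
    rcases Nat.eq_zero_or_pos m' with rfl | hm0'
    · have := zsum_pos hm0
      rw [heq, zsum_zero] at this
      omega
    -- sizes are equal
    have hsize : ∀ a b : ℕ, 0 < a → 0 < b → Fibbinary a → Fibbinary b →
        zsum a 2 = zsum b 2 → a.size ≤ b.size := by
      intro a b ha hb hfa hfb hab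
      by_contra hlt
      push_neg at hlt
      have h1 : 2^(a.size - 1) ≤ a := by
        have : a.size - 1 < a.size := by
          have := Nat.size_pos.mpr ha; omega
        exact Nat.lt_size.mp this
      have h2 : Nat.fib (a.size - 1 + 2) ≤ zsum a 2 := zsum_lower _ _ _ h1
      have h3 : zsum b 2 < Nat.fib (b.size + 2) := zsum_upper' hfb (Nat.lt_size_self b)
      have h4 : Nat.fib (b.size + 2) ≤ Nat.fib (a.size - 1 + 2) :=
        Nat.fib_mono (by omega)
      omega
    have hs1 := hsize m m' hm0 hm0' hm hm' heq
    have hs2 := hsize m' m hm0' hm0 hm' hm heq.symm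
    have hss : m.size = m'.size := le_antisymm hs1 hs2
    set j := m.size - 1 with hj
    have hjpos : 0 < m.size := Nat.size_pos.mpr hm0
    have hm_lb : 2^j ≤ m := Nat.lt_size.mp (by omega)
    have hm_ub : m < 2^(j+1) := by
      have := Nat.lt_size_self m
      have : (2:ℕ)^m.size = 2^(j+1) := by congr 1; omega
      omega
    have hm_lb' : 2^j ≤ m' := Nat.lt_size.mp (by omega)
    have hm_ub' : m' < 2^(j+1) := by
      have h5 := Nat.lt_size_self m'
      have : (2:ℕ)^m'.size = 2^(j+1) := by congr 1; omega
      omega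
    -- decompose
    have hdec : ∀ a : ℕ, 2^j ≤ a → a < 2^(j+1) → a = 2^j + a % 2^j := by
      intro a h1 h2
      have hd : a / 2^j = 1 := by
        have h3 : 2^(j+1) = 2^j * 2 := by rw [pow_succ]
        have h4 : a / 2^j < 2 := (Nat.div_lt_iff_lt_mul (show 0 < 2^j by positivity)).mpr
          (by omega)
        have h5 : 1 ≤ a / 2^j := (Nat.one_le_div_iff (by positivity)).mpr h1
        omega
      have hda := Nat.div_add_mod a (2^j)
      rw [hd, mul_one] at hda
      omega
    have hrm : m = 2^j + m % 2^j := hdec m hm_lb hm_ub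
    have hrm' : m' = 2^j + m' % 2^j := hdec m' hm_lb' hm_ub'
    have hmod_lt : m % 2^j < 2^j := Nat.mod_lt _ (by positivity)
    have hmod_lt' : m' % 2^j < 2^j := Nat.mod_lt _ (by positivity)
    have e1 : zsum m 2 = Nat.fib (j+2) + zsum (m % 2^j) 2 := by
      nth_rewrite 1 [hrm]
      exact zsum_pow_add j _ 2 hmod_lt
    have e2 : zsum m' 2 = Nat.fib (j+2) + zsum (m' % 2^j) 2 := by
      nth_rewrite 1 [hrm']
      exact zsum_pow_add j _ 2 hmod_lt'
    have heq' : zsum (m % 2^j) 2 = zsum (m' % 2^j) 2 := by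
      rw [e1, e2] at heq; omega
    have hr : m % 2^j = m' % 2^j := by
      refine ih (m % 2^j) ?_ (fibbinary_mod_pow hm j) _ (fibbinary_mod_pow hm' j) heq'
      calc m % 2^j < 2^j := hmod_lt
        _ ≤ m := hm_lb
    omega

lemma lt_fib_add_two (n : ℕ) : n + 1 ≤ Nat.fib (n + 2) := by
  induction n with
  | zero => simp
  | succ n ih =>
    show n + 2 ≤ Nat.fib (n+3)
    have h1 : Nat.fib (n+3) = Nat.fib (n+1) + Nat.fib (n+2) := by
      have := Nat.fib_add_two (n := n+1)
      rw [show n+1+2 = n+3 from rfl, show n+1+1 = n+2 from rfl] at this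
      exact this
    have h2 : 0 < Nat.fib (n+1) := Nat.fib_pos.mpr (by omega)
    omega

/-- Existence of Zeckendorf representation, phrased via `zsum`. -/
lemma zsum_exists : ∀ n : ℕ, ∃ m : ℕ, Fibbinary m ∧ zsum m 2 = n := by
  intro n
  induction n using Nat.strong_induction_on with
  | _ n ih =>
    rcases Nat.eq_zero_or_pos n with rfl | hn
    · exact ⟨0, fun i h => by simp [Nat.zero_testBit] at h, zsum_zero 2⟩
    obtain ⟨j, hj1, hj2⟩ : ∃ j, Nat.fib (j+2) ≤ n ∧ n < Nat.fib (j+3) := by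
      set P : ℕ → Prop := fun j => Nat.fib (j+2) ≤ n with hP
      have hP0 : P 0 := by simp [hP, Nat.fib]; omega
      refine ⟨Nat.findGreatest P n, Nat.findGreatest_spec (Nat.zero_le n) hP0, ?_⟩
      set j := Nat.findGreatest P n with hjdef
      rcases Nat.lt_or_ge n (j+1) with h | h
      · have h1 := lt_fib_add_two (j+1)
        rw [show j+1+2 = j+3 from rfl] at h1
        omega
      · have := Nat.findGreatest_is_greatest (P := P) (n := n) (k := j+1)
          (by omega) (by omega)
        simp only [hP] at this
        rw [show j+1+2 = j+3 from rfl] at this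
        omega
    have hfib3 : Nat.fib (j+3) = Nat.fib (j+1) + Nat.fib (j+2) :=
      Nat.fib_add_two (n := j+1)
    set n' := n - Nat.fib (j+2) with hn'
    have hn'lt : n' < Nat.fib (j+1) := by omega
    have hfibpos : 0 < Nat.fib (j+2) := Nat.fib_pos.mpr (by omega)
    obtain ⟨m', hfm', hzm'⟩ := ih n' (by omega)
    have hsmall : 2 * m' < 2^j := by
      by_contra hcon
      push_neg at hcon
      have h1 : 2^(j-1) ≤ m' := by
        rcases Nat.eq_zero_or_pos j with rfl | hj
        · simpa using (by omega : 1 ≤ m')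
        · have : (2:ℕ)^j = 2^(j-1) * 2 := by
            rw [← pow_succ]; congr 1; omega
          omega
      have h2 : Nat.fib (j-1+2) ≤ zsum m' 2 := zsum_lower _ _ _ h1
      have h3 : Nat.fib (j+1) ≤ Nat.fib (j-1+2) := Nat.fib_mono (by omega)
      omega
    refine ⟨2^j + m', fibbinary_pow_add hfm' hsmall, ?_⟩
    rw [zsum_pow_add j m' 2 (by omega), hzm']
    omega

lemma zsumAux_sum_range_pow (b : ℕ) : ∑ j ∈ Finset.range b, 2^j = 2^b - 1 := by
  induction b with
  | zero => simp
  | succ b ihb =>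
    rw [Finset.sum_range_succ, ihb, pow_succ]
    have : 0 < 2^b := by positivity
    omega

lemma sum_pow_lt {T : Finset ℕ} {b : ℕ} (hT : ∀ j ∈ T, j < b) :
    ∑ j ∈ T, 2^j < 2^b := by
  have hsub : T ⊆ Finset.range b := fun j hj => Finset.mem_range.mpr (hT j hj)
  have h1 : ∑ j ∈ T, 2^j ≤ ∑ j ∈ Finset.range b, 2^j :=
    Finset.sum_le_sum_of_subset hsub
  have h2 := zsumAux_sum_range_pow b
  have : 0 < 2^b := by positivity
  omega

lemma testBit_sum_pow (T : Finset ℕ) :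
    ∀ i, (∑ j ∈ T, 2^j).testBit i = true ↔ i ∈ T := by
  induction T using Finset.induction_on_max with
  | empty => simp [Nat.zero_testBit]
  | insert a T hmax ihT =>
    intro i
    have hnotin : a ∉ T := fun h => lt_irrefl a (hmax a h)
    rw [Finset.sum_insert hnotin]
    have hlt : ∑ j ∈ T, 2^j < 2^a := sum_pow_lt hmax
    rw [testBit_pow_add hlt]
    by_cases h : i = a
    · subst h; simp
    · rw [if_neg h, ihT i, Finset.mem_insert]
      constructor
      · exact Or.inr
      · rintro (rfl | hi)
        · exact absurd rfl h
        · exact hi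

lemma zsum_sum_pow (T : Finset ℕ) :
    zsum (∑ j ∈ T, 2^j) 2 = ∑ j ∈ T, Nat.fib (j+2) := by
  induction T using Finset.induction_on_max with
  | empty => simp [zsum_zero]
  | insert a T hmax ihT =>
    have hnotin : a ∉ T := fun h => lt_irrefl a (hmax a h)
    have hlt : ∑ j ∈ T, 2^j < 2^a := sum_pow_lt hmax
    rw [Finset.sum_insert hnotin, Finset.sum_insert hnotin, zsum_pow_add a _ 2 hlt, ihT]

lemma fibbinary_sum_pow {T : Finset ℕ} (hgap : ∀ j ∈ T, j + 1 ∉ T) :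
    Fibbinary (∑ j ∈ T, 2^j) := by
  intro i ⟨h1, h2⟩
  rw [testBit_sum_pow] at h1 h2
  exact hgap i h1 h2

/-- The Zeckendorf-to-binary map `n = ∑ a_i F_i ↦ ∑ a_i 2^(i-2)` (with
`F_2 = 1, F_3 = 2, ...`, i.e. `F i = Nat.fib i`) is a bijection from the
positive integers onto the positive fibbinary numbers. -/
theorem zeckendorf_fibbinary_bijection :
    ∃ f : ℕ → ℕ,
      (∀ (n : ℕ) (S : Finset ℕ), 0 < n → (∀ i ∈ S, 2 ≤ i) → (∀ i ∈ S, i + 1 ∉ S) →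
        n = ∑ i ∈ S, Nat.fib i → f n = ∑ i ∈ S, 2 ^ (i - 2)) ∧
      Set.BijOn f {n : ℕ | 0 < n} {m : ℕ | 0 < m ∧ Fibbinary m} := by
  choose f hf1 hf2 using zsum_exists
  refine ⟨f, ?_, ?_, ?_, ?_⟩
  · -- the explicit formula on Zeckendorf representations
    intro n S hn hS2 hgap hsum
    classical
    set T := S.image (fun i => i - 2) with hT
    have hinj : ∀ x ∈ S, ∀ y ∈ S, x - 2 = y - 2 → x = y := by
      intro x hx y hy hxy
      have := hS2 x hx
      have := hS2 y hy
      omega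
    have e1 : ∑ j ∈ T, 2^j = ∑ i ∈ S, 2^(i-2) := Finset.sum_image hinj
    have e2 : ∑ j ∈ T, Nat.fib (j+2) = ∑ i ∈ S, Nat.fib i := by
      rw [hT, Finset.sum_image hinj]
      refine Finset.sum_congr rfl fun i hi => ?_
      have := hS2 i hi
      congr 1
      omega
    have gapT : ∀ j ∈ T, j + 1 ∉ T := by
      intro j hj hj1
      rw [hT, Finset.mem_image] at hj hj1
      obtain ⟨i, hi, rfl⟩ := hj
      obtain ⟨i', hi', hii'⟩ := hj1
      have h2 := hS2 i hi
      have h2' := hS2 i' hi'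
      have : i' = i + 1 := by omega
      exact hgap i hi (this ▸ hi')
    have hfbT : Fibbinary (∑ j ∈ T, 2^j) := fibbinary_sum_pow gapT
    have hzT : zsum (∑ j ∈ T, 2^j) 2 = n := by
      rw [zsum_sum_pow, e2, ← hsum]
    have : f n = ∑ j ∈ T, 2^j :=
      zsum_inj (f n) (hf1 n) _ hfbT (by rw [hf2 n, hzT])
    rw [this, e1]
  · -- MapsTo
    intro n hn
    refine ⟨?_, hf1 n⟩
    by_contra h
    push_neg at h
    have h0 : f n = 0 := by omega
    have := hf2 n
    rw [h0, zsum_zero] at this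
    simp only [Set.mem_setOf_eq] at hn
    omega
  · -- InjOn
    intro n _ n' _ h
    rw [← hf2 n, ← hf2 n', h]
  · -- SurjOn
    intro m hm
    obtain ⟨hm0, hmf⟩ := hm
    refine ⟨zsum m 2, ?_, ?_⟩
    · exact zsum_pos hm0
    · exact zsum_inj (f (zsum m 2)) (hf1 _) m hmf (by rw [hf2])
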